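/- arXiv:2007.08316 — 2 statements merged into one kernel-verified Lean document; each statement's English description precedes it below -/
import Mathlib

section
/- Let 0 < α < β, c₀ > 0, λ ∈ ℝ. Let S, y, z, f³ : [α,β] → ℂ be continuously differentiable and v, f² : [α,β] → ℂ continuous, satisfying on (α,β): i λ v − S′ + c₀ z = f² and i λ y − z = f³. Then c₀ ∫_α^β |z|² dx = Re( i λ ∫_α^β S ȳ′ dx ) + Re( ∫_α^β S \overline{f³′} dx ) + Re( S(β) z̄(β) − S(α) z̄(α) ) + Re( ∫_α^β f² z̄ dx ) − Re( i λ ∫_α^β v z̄ dx ). -/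
open MeasureTheory Complex

/-- Identity expressing the localized `L²`-norm of `z` through the total stress `S`,
from the resolvent equations `iλv − S′ + c₀z = f²` and `iλy − z = f³` on `(α,β)`. -/
theorem stmt_14 (α β c₀ lam : ℝ) (hα : 0 < α) (hαβ : α < β) (hc₀ : 0 < c₀)
    (S S' y y' z z' f₃ f₃' : ℝ → ℂ)
    (hS : ∀ x ∈ Set.Icc α β, HasDerivAt S (S' x) x)
    (hS'c : ContinuousOn S' (Set.Icc α β))
    (hy : ∀ x ∈ Set.Icc α β, HasDerivAt y (y' x) x)
    (hy'c : ContinuousOn y' (Set.Icc α β))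
    (hz : ∀ x ∈ Set.Icc α β, HasDerivAt z (z' x) x)
    (hz'c : ContinuousOn z' (Set.Icc α β))
    (hf₃ : ∀ x ∈ Set.Icc α β, HasDerivAt f₃ (f₃' x) x)
    (hf₃'c : ContinuousOn f₃' (Set.Icc α β))
    (v f₂ : ℝ → ℂ)
    (hvc : ContinuousOn v (Set.Icc α β)) (hf₂c : ContinuousOn f₂ (Set.Icc α β))
    (heq2 : ∀ x ∈ Set.Ioo α β,
      Complex.I * (lam : ℂ) * v x - S' x + (c₀ : ℂ) * z x = f₂ x)
    (heq3 : ∀ x ∈ Set.Ioo α β, Complex.I * (lam : ℂ) * y x - z x = f₃ x) :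
    c₀ * ∫ x in α..β, ‖z x‖ ^ 2
      = (Complex.I * (lam : ℂ) * ∫ x in α..β, S x * (starRingEnd ℂ) (y' x)).re
        + (∫ x in α..β, S x * (starRingEnd ℂ) (f₃' x)).re
        + (S β * (starRingEnd ℂ) (z β) - S α * (starRingEnd ℂ) (z α)).re
        + (∫ x in α..β, f₂ x * (starRingEnd ℂ) (z x)).re
        - (Complex.I * (lam : ℂ) * ∫ x in α..β, v x * (starRingEnd ℂ) (z x)).re := by
  have hle := hαβ.le
  have hIcc : Set.uIcc α β = Set.Icc α β := Set.uIcc_of_le hle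
  have hSc : ContinuousOn S (Set.Icc α β) := fun x hx => (hS x hx).continuousAt.continuousWithinAt
  have hzc : ContinuousOn z (Set.Icc α β) := fun x hx => (hz x hx).continuousAt.continuousWithinAt
  have intg : ∀ f : ℝ → ℂ, ContinuousOn f (Set.Icc α β) → IntervalIntegrable f volume α β := by
    intro f hf
    apply ContinuousOn.intervalIntegrable
    rwa [hIcc]
  have cstar : ∀ {f : ℝ → ℂ}, ContinuousOn f (Set.Icc α β) →
      ContinuousOn (fun x => (starRingEnd ℂ) (f x)) (Set.Icc α β) := fun hf => hf.star
  have haeβ : ∀ᵐ x : ℝ, x ≠ β := by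
    have h0 : (volume : Measure ℝ) {β} = 0 := measure_singleton β
    exact ae_iff.mpr (by simp [h0])
  have congrIoo : ∀ (f g : ℝ → ℂ), (∀ x ∈ Set.Ioo α β, f x = g x) →
      (∫ x in α..β, f x) = ∫ x in α..β, g x := by
    intro f g h
    apply intervalIntegral.integral_congr_ae
    filter_upwards [haeβ] with x hx hmem
    rw [Set.uIoc_of_le hle] at hmem
    exact h x ⟨hmem.1, lt_of_le_of_ne hmem.2 hx⟩
  -- derivative relation from heq3
  have hz'eq : ∀ x ∈ Set.Ioo α β, z' x = Complex.I * (lam : ℂ) * y' x - f₃' x := by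
    intro x hx
    have hxI : x ∈ Set.Icc α β := Set.Ioo_subset_Icc_self hx
    have h1 : HasDerivAt (fun t => Complex.I * (lam : ℂ) * y t - f₃ t)
        (Complex.I * (lam : ℂ) * y' x - f₃' x) x :=
      ((hy x hxI).const_mul _).sub (hf₃ x hxI)
    have h2 : HasDerivAt z (Complex.I * (lam : ℂ) * y' x - f₃' x) x := by
      refine h1.congr_of_eventuallyEq ?_
      filter_upwards [Ioo_mem_nhds hx.1 hx.2] with t ht
      linear_combination -heq3 t ht
    exact (hz x hxI).unique h2
  -- integration by parts
  have hibp : (∫ x in α..β, (S' x * (starRingEnd ℂ) (z x) + S x * (starRingEnd ℂ) (z' x)))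
      = S β * (starRingEnd ℂ) (z β) - S α * (starRingEnd ℂ) (z α) := by
    apply intervalIntegral.integral_eq_sub_of_hasDerivAt
    · intro x hx
      rw [hIcc] at hx
      exact (hS x hx).mul ((hz x hx).star)
    · exact intg _ ((hS'c.mul (cstar hzc)).add (hSc.mul (cstar hz'c)))
  have intA := intg (fun x => S' x * (starRingEnd ℂ) (z x)) (hS'c.mul (cstar hzc))
  have intB := intg (fun x => S x * (starRingEnd ℂ) (z' x)) (hSc.mul (cstar hz'c))
  have hsplit : (∫ x in α..β, S' x * (starRingEnd ℂ) (z x))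
      + (∫ x in α..β, S x * (starRingEnd ℂ) (z' x))
      = S β * (starRingEnd ℂ) (z β) - S α * (starRingEnd ℂ) (z α) := by
    rw [← intervalIntegral.integral_add intA intB]; exact hibp
  have hB : (∫ x in α..β, S x * (starRingEnd ℂ) (z' x))
      = -(Complex.I * (lam : ℂ)) * (∫ x in α..β, S x * (starRingEnd ℂ) (y' x))
        - ∫ x in α..β, S x * (starRingEnd ℂ) (f₃' x) := by
    have h1 : (∫ x in α..β, S x * (starRingEnd ℂ) (z' x))
        = ∫ x in α..β, (-(Complex.I * (lam : ℂ)) * (S x * (starRingEnd ℂ) (y' x))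
            - S x * (starRingEnd ℂ) (f₃' x)) := by
      apply congrIoo
      intro x hx
      rw [hz'eq x hx]
      simp only [map_sub, map_mul, Complex.conj_I, Complex.conj_ofReal]
      ring
    rw [h1, intervalIntegral.integral_sub
        (((intg (fun x => S x * (starRingEnd ℂ) (y' x)) (hSc.mul (cstar hy'c))).const_mul _))
        (intg (fun x => S x * (starRingEnd ℂ) (f₃' x)) (hSc.mul (cstar hf₃'c))),
      intervalIntegral.integral_const_mul]
  have hmain : (∫ x in α..β, (c₀ : ℂ) * z x * (starRingEnd ℂ) (z x))
      = (∫ x in α..β, f₂ x * (starRingEnd ℂ) (z x))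
        - Complex.I * (lam : ℂ) * (∫ x in α..β, v x * (starRingEnd ℂ) (z x))
        + ∫ x in α..β, S' x * (starRingEnd ℂ) (z x) := by
    have h1 : (∫ x in α..β, (c₀ : ℂ) * z x * (starRingEnd ℂ) (z x))
        = ∫ x in α..β, (f₂ x * (starRingEnd ℂ) (z x)
            - Complex.I * (lam : ℂ) * (v x * (starRingEnd ℂ) (z x))
            + S' x * (starRingEnd ℂ) (z x)) := by
      apply congrIoo
      intro x hx
      linear_combination (heq2 x hx) * (starRingEnd ℂ) (z x)
    rw [h1, intervalIntegral.integral_add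
        (((intg (fun x => f₂ x * (starRingEnd ℂ) (z x)) (hf₂c.mul (cstar hzc))).sub ((intg (fun x => v x * (starRingEnd ℂ) (z x)) (hvc.mul (cstar hzc))).const_mul _)))
        intA,
      intervalIntegral.integral_sub (intg (fun x => f₂ x * (starRingEnd ℂ) (z x)) (hf₂c.mul (cstar hzc)))
        ((intg (fun x => v x * (starRingEnd ℂ) (z x)) (hvc.mul (cstar hzc))).const_mul _),
      intervalIntegral.integral_const_mul]
  have hreal : (∫ x in α..β, (c₀ : ℂ) * z x * (starRingEnd ℂ) (z x))
      = ((c₀ * ∫ x in α..β, ‖z x‖ ^ 2 : ℝ) : ℂ) := by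
    have hpt : ∀ x : ℝ, (c₀ : ℂ) * z x * (starRingEnd ℂ) (z x)
        = ((c₀ * ‖z x‖ ^ 2 : ℝ) : ℂ) := by
      intro x
      rw [mul_assoc, Complex.mul_conj, Complex.normSq_eq_norm_sq]
      push_cast
      ring
    simp_rw [hpt]
    rw [intervalIntegral.integral_ofReal, intervalIntegral.integral_const_mul]
  have hfinal : ((c₀ * ∫ x in α..β, ‖z x‖ ^ 2 : ℝ) : ℂ)
      = Complex.I * (lam : ℂ) * (∫ x in α..β, S x * (starRingEnd ℂ) (y' x))
        + (∫ x in α..β, S x * (starRingEnd ℂ) (f₃' x))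
        + (S β * (starRingEnd ℂ) (z β) - S α * (starRingEnd ℂ) (z α))
        + (∫ x in α..β, f₂ x * (starRingEnd ℂ) (z x))
        - Complex.I * (lam : ℂ) * (∫ x in α..β, v x * (starRingEnd ℂ) (z x)) := by
    rw [← hreal, hmain]
    have hA : (∫ x in α..β, S' x * (starRingEnd ℂ) (z x))
        = (S β * (starRingEnd ℂ) (z β) - S α * (starRingEnd ℂ) (z α))
          - (∫ x in α..β, S x * (starRingEnd ℂ) (z' x)) := by
      linear_combination hsplit
    rw [hA, hB]
    ring
  have hre := congrArg Complex.re hfinal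
  simp only [Complex.ofReal_re, Complex.add_re, Complex.sub_re] at hre ⊢
  linarith [hre]
end

section
/- Let p < q be real numbers, let g : [p,q] → ℝ be continuously differentiable with g(p) = 1 and g(q) = −1, and set M_g = max_{[p,q]} |g| and M_{g′} = max_{[p,q]} |g′|. Let λ ∈ ℝ, c₀ > 0, let y : [p,q] → ℂ be twice continuously differentiable, let z, g₃ : [p,q] → ℂ be continuously differentiable, and let v, g₄ : [p,q] → ℂ be continuous, satisfying on (p,q): i λ y′(x) − z′(x) = g₃′(x) and i λ z(x) − y″(x) − c₀ v(x) = g₄(x). Then |z(q)|² + |z(p)|² + |y′(q)|² + |y′(p)|² ≤ M_{g′} ∫_p^q (|z|² + |y′|²) dx + 2 c₀ M_g (∫_p^q |v|² dx)^{1/2} (∫_p^q |y′|² dx)^{1/2} + 2 M_g (∫_p^q |g₃′|² dx)^{1/2} (∫_p^q |z|² dx)^{1/2} + 2 M_g (∫_p^q |g₄|² dx)^{1/2} (∫_p^q |y′|² dx)^{1/2}. -/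
open MeasureTheory Complex

lemma aux_hasDerivAt_norm_sq {f : ℝ → ℂ} {f' : ℂ} {x : ℝ} (hf : HasDerivAt f f' x) :
    HasDerivAt (fun t => ‖f t‖ ^ 2) (2 * ((starRingEnd ℂ) (f x) * f').re) x := by
  have hre : HasDerivAt (fun t => (f t).re) f'.re x :=
    Complex.reCLM.hasFDerivAt.comp_hasDerivAt x hf
  have him : HasDerivAt (fun t => (f t).im) f'.im x :=
    Complex.imCLM.hasFDerivAt.comp_hasDerivAt x hf
  have h := (hre.pow 2).add (him.pow 2)
  have heq : (fun t => ‖f t‖ ^ 2) = fun t => (f t).re ^ 2 + (f t).im ^ 2 := by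
    funext t
    rw [Complex.sq_norm, Complex.normSq_apply]
    ring
  rw [heq]
  refine h.congr_deriv ?_
  simp [Complex.mul_re]
  ring

lemma aux_cs {p q : ℝ} (hpq : p ≤ q) {f h : ℝ → ℂ}
    (hf : ContinuousOn f (Set.Icc p q)) (hh : ContinuousOn h (Set.Icc p q)) :
    ∫ x in p..q, ‖f x‖ * ‖h x‖ ≤
      Real.sqrt (∫ x in p..q, ‖f x‖ ^ 2) * Real.sqrt (∫ x in p..q, ‖h x‖ ^ 2) := by
  haveI : IsFiniteMeasure (volume.restrict (Set.Ioc p q)) :=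
    ⟨by simp [Real.volume_Ioc]⟩
  obtain ⟨Cf, hCf⟩ := (isCompact_Icc (a := p) (b := q)).exists_bound_of_continuousOn hf
  obtain ⟨Ch, hCh⟩ := (isCompact_Icc (a := p) (b := q)).exists_bound_of_continuousOn hh
  have hfm : AEStronglyMeasurable (fun x => ‖f x‖) (volume.restrict (Set.Ioc p q)) :=
    ((hf.mono Set.Ioc_subset_Icc_self).norm.aestronglyMeasurable measurableSet_Ioc)
  have hhm : AEStronglyMeasurable (fun x => ‖h x‖) (volume.restrict (Set.Ioc p q)) :=
    ((hh.mono Set.Ioc_subset_Icc_self).norm.aestronglyMeasurable measurableSet_Ioc)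
  have hfl : MemLp (fun x => ‖f x‖) (ENNReal.ofReal 2) (volume.restrict (Set.Ioc p q)) := by
    refine MemLp.of_bound hfm Cf ?_
    filter_upwards [ae_restrict_mem measurableSet_Ioc] with x hx
    simpa using hCf x (Set.Ioc_subset_Icc_self hx)
  have hhl : MemLp (fun x => ‖h x‖) (ENNReal.ofReal 2) (volume.restrict (Set.Ioc p q)) := by
    refine MemLp.of_bound hhm Ch ?_
    filter_upwards [ae_restrict_mem measurableSet_Ioc] with x hx
    simpa using hCh x (Set.Ioc_subset_Icc_self hx)
  have key := integral_mul_le_Lp_mul_Lq_of_nonneg (μ := volume.restrict (Set.Ioc p q))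
    Real.HolderConjugate.two_two
    (Filter.Eventually.of_forall fun x => norm_nonneg (f x))
    (Filter.Eventually.of_forall fun x => norm_nonneg (h x)) hfl hhl
  simp_rw [Real.rpow_two] at key
  rw [intervalIntegral.integral_of_le hpq, intervalIntegral.integral_of_le hpq,
    intervalIntegral.integral_of_le hpq, Real.sqrt_eq_rpow, Real.sqrt_eq_rpow]
  exact key

/-- Combined boundary-trace estimate for `z` and `y′` of the undamped wave component,
from `iλy′ − z′ = g₃′` and `iλz − y″ − c₀v = g₄` on `(p,q)` via the multipliers
`2gz̄` and `2gȳ′`. -/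
theorem stmt_15 (p q lam c₀ Mg Mg' : ℝ) (hpq : p < q) (hc₀ : 0 < c₀)
    (g g' : ℝ → ℝ)
    (hg : ∀ x ∈ Set.Icc p q, HasDerivAt g (g' x) x)
    (hg'c : ContinuousOn g' (Set.Icc p q))
    (hgp : g p = 1) (hgq : g q = -1)
    (hMg : IsGreatest ((fun x => |g x|) '' Set.Icc p q) Mg)
    (hMg' : IsGreatest ((fun x => |g' x|) '' Set.Icc p q) Mg')
    (y y' y'' z z' g₃ g₃' : ℝ → ℂ)
    (hy : ∀ x ∈ Set.Icc p q, HasDerivAt y (y' x) x)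
    (hy' : ∀ x ∈ Set.Icc p q, HasDerivAt y' (y'' x) x)
    (hy''c : ContinuousOn y'' (Set.Icc p q))
    (hz : ∀ x ∈ Set.Icc p q, HasDerivAt z (z' x) x)
    (hz'c : ContinuousOn z' (Set.Icc p q))
    (hg₃ : ∀ x ∈ Set.Icc p q, HasDerivAt g₃ (g₃' x) x)
    (hg₃'c : ContinuousOn g₃' (Set.Icc p q))
    (v g₄ : ℝ → ℂ)
    (hvc : ContinuousOn v (Set.Icc p q)) (hg₄c : ContinuousOn g₄ (Set.Icc p q))
    (heq3 : ∀ x ∈ Set.Ioo p q, Complex.I * (lam : ℂ) * y' x - z' x = g₃' x)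
    (heq4 : ∀ x ∈ Set.Ioo p q,
      Complex.I * (lam : ℂ) * z x - y'' x - (c₀ : ℂ) * v x = g₄ x) :
    ‖z q‖ ^ 2 + ‖z p‖ ^ 2 + ‖y' q‖ ^ 2 + ‖y' p‖ ^ 2 ≤
      Mg' * (∫ x in p..q, (‖z x‖ ^ 2 + ‖y' x‖ ^ 2))
        + 2 * c₀ * Mg * Real.sqrt (∫ x in p..q, ‖v x‖ ^ 2)
            * Real.sqrt (∫ x in p..q, ‖y' x‖ ^ 2)
        + 2 * Mg * Real.sqrt (∫ x in p..q, ‖g₃' x‖ ^ 2)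
            * Real.sqrt (∫ x in p..q, ‖z x‖ ^ 2)
        + 2 * Mg * Real.sqrt (∫ x in p..q, ‖g₄ x‖ ^ 2)
            * Real.sqrt (∫ x in p..q, ‖y' x‖ ^ 2) := by
  have hpq' : p ≤ q := hpq.le
  have hIcc : Set.Ioo p q ⊆ Set.Icc p q := Set.Ioo_subset_Icc_self
  have hzc : ContinuousOn z (Set.Icc p q) := fun x hx => (hz x hx).continuousAt.continuousWithinAt
  have hy'c : ContinuousOn y' (Set.Icc p q) := fun x hx => (hy' x hx).continuousAt.continuousWithinAt
  have hgc : ContinuousOn g (Set.Icc p q) := fun x hx => (hg x hx).continuousAt.continuousWithinAt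
  have hMg1 : (1:ℝ) ≤ Mg := by
    have := hMg.2 ⟨p, Set.left_mem_Icc.2 hpq', rfl⟩
    simpa [hgp] using this
  have hMg0 : (0:ℝ) ≤ Mg := zero_le_one.trans hMg1
  have hMg'0 : (0:ℝ) ≤ Mg' := (abs_nonneg (g' p)).trans (hMg'.2 ⟨p, Set.left_mem_Icc.2 hpq', rfl⟩)
  set Fd : ℝ → ℝ := fun x => g' x * (‖z x‖ ^ 2 + ‖y' x‖ ^ 2)
      + g x * (2 * ((starRingEnd ℂ) (z x) * z' x).re
        + 2 * ((starRingEnd ℂ) (y' x) * y'' x).re) with hFddef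
  have hF : ∀ x ∈ Set.Icc p q,
      HasDerivAt (fun t => g t * (‖z t‖ ^ 2 + ‖y' t‖ ^ 2)) (Fd x) x :=
    fun x hx => (hg x hx).mul
      ((aux_hasDerivAt_norm_sq (hz x hx)).add (aux_hasDerivAt_norm_sq (hy' x hx)))
  have hstarz : ContinuousOn (fun x => (starRingEnd ℂ) (z x)) (Set.Icc p q) := hzc.star
  have hstary' : ContinuousOn (fun x => (starRingEnd ℂ) (y' x)) (Set.Icc p q) := hy'c.star
  have hFdc : ContinuousOn Fd (Set.Icc p q) := by
    apply ContinuousOn.add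
    · exact hg'c.mul ((hzc.norm.pow 2).add (hy'c.norm.pow 2))
    · exact hgc.mul
        ((continuousOn_const.mul (Complex.continuous_re.comp_continuousOn (hstarz.mul hz'c))).add
          (continuousOn_const.mul (Complex.continuous_re.comp_continuousOn (hstary'.mul hy''c))))
  have hFdi : IntervalIntegrable Fd volume p q :=
    ContinuousOn.intervalIntegrable (by rwa [Set.uIcc_of_le hpq'])
  have hFTC : ∫ x in p..q, Fd x
      = g q * (‖z q‖ ^ 2 + ‖y' q‖ ^ 2) - g p * (‖z p‖ ^ 2 + ‖y' p‖ ^ 2) :=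
    intervalIntegral.integral_eq_sub_of_hasDerivAt
      (fun x hx => hF x (by rwa [Set.uIcc_of_le hpq'] at hx)) hFdi
  have hLHS : ‖z q‖ ^ 2 + ‖z p‖ ^ 2 + ‖y' q‖ ^ 2 + ‖y' p‖ ^ 2 = -(∫ x in p..q, Fd x) := by
    rw [hFTC, hgq, hgp]; ring
  set B : ℝ → ℝ := fun x => Mg' * (‖z x‖ ^ 2 + ‖y' x‖ ^ 2)
      + 2 * Mg * c₀ * (‖v x‖ * ‖y' x‖) + 2 * Mg * (‖g₃' x‖ * ‖z x‖)
      + 2 * Mg * (‖g₄ x‖ * ‖y' x‖) with hBdef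
  have habs : ∀ a b : ℂ, |((starRingEnd ℂ) a * b).re| ≤ ‖a‖ * ‖b‖ := by
    intro a b
    refine (Complex.abs_re_le_norm _).trans ?_
    rw [norm_mul]
    simp
  have hpoint : ∀ x ∈ Set.Ioo p q, -(Fd x) ≤ B x := by
    intro x hx
    have hxI := hIcc hx
    have hz'x : z' x = Complex.I * lam * y' x - g₃' x := by
      have h := heq3 x hx; linear_combination -h
    have hy''x : y'' x = Complex.I * lam * z x - (c₀ : ℂ) * v x - g₄ x := by
      have h := heq4 x hx; linear_combination -h
    have hkey : 2 * ((starRingEnd ℂ) (z x) * z' x).re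
        + 2 * ((starRingEnd ℂ) (y' x) * y'' x).re
        = -(2 * ((starRingEnd ℂ) (z x) * g₃' x).re
          + 2 * c₀ * ((starRingEnd ℂ) (y' x) * v x).re
          + 2 * ((starRingEnd ℂ) (y' x) * g₄ x).re) := by
      rw [hz'x, hy''x]
      simp [Complex.mul_re, Complex.mul_im, Complex.sub_re, Complex.sub_im]
      ring
    have hg'b : |g' x| ≤ Mg' := hMg'.2 ⟨x, hxI, rfl⟩
    have hgb : |g x| ≤ Mg := hMg.2 ⟨x, hxI, rfl⟩
    have hA0 : (0:ℝ) ≤ ‖z x‖ ^ 2 + ‖y' x‖ ^ 2 := by positivity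
    have e1 : -(Fd x) = -(g' x) * (‖z x‖ ^ 2 + ‖y' x‖ ^ 2)
        + g x * (2 * ((starRingEnd ℂ) (z x) * g₃' x).re
          + 2 * c₀ * ((starRingEnd ℂ) (y' x) * v x).re
          + 2 * ((starRingEnd ℂ) (y' x) * g₄ x).re) := by
      rw [hFddef]
      simp only []
      rw [hkey]; ring
    have t1 : -(g' x) * (‖z x‖ ^ 2 + ‖y' x‖ ^ 2) ≤ Mg' * (‖z x‖ ^ 2 + ‖y' x‖ ^ 2) :=
      mul_le_mul_of_nonneg_right ((neg_le_abs _).trans hg'b) hA0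
    have u1 : |2 * ((starRingEnd ℂ) (z x) * g₃' x).re| ≤ 2 * (‖z x‖ * ‖g₃' x‖) := by
      rw [abs_mul, _root_.abs_two]
      exact mul_le_mul_of_nonneg_left (habs _ _) (by norm_num)
    have u2 : |2 * c₀ * ((starRingEnd ℂ) (y' x) * v x).re| ≤ 2 * c₀ * (‖y' x‖ * ‖v x‖) := by
      rw [abs_mul, abs_of_pos (by linarith : (0:ℝ) < 2 * c₀)]
      exact mul_le_mul_of_nonneg_left (habs _ _) (by linarith)
    have u3 : |2 * ((starRingEnd ℂ) (y' x) * g₄ x).re| ≤ 2 * (‖y' x‖ * ‖g₄ x‖) := by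
      rw [abs_mul, _root_.abs_two]
      exact mul_le_mul_of_nonneg_left (habs _ _) (by norm_num)
    have hT : |2 * ((starRingEnd ℂ) (z x) * g₃' x).re
          + 2 * c₀ * ((starRingEnd ℂ) (y' x) * v x).re
          + 2 * ((starRingEnd ℂ) (y' x) * g₄ x).re|
        ≤ 2 * (‖z x‖ * ‖g₃' x‖) + 2 * c₀ * (‖y' x‖ * ‖v x‖) + 2 * (‖y' x‖ * ‖g₄ x‖) := by
      have a1 := abs_add_le (2 * ((starRingEnd ℂ) (z x) * g₃' x).re
          + 2 * c₀ * ((starRingEnd ℂ) (y' x) * v x).re)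
        (2 * ((starRingEnd ℂ) (y' x) * g₄ x).re)
      have a2 := abs_add_le (2 * ((starRingEnd ℂ) (z x) * g₃' x).re)
        (2 * c₀ * ((starRingEnd ℂ) (y' x) * v x).re)
      linarith
    have t2 : g x * (2 * ((starRingEnd ℂ) (z x) * g₃' x).re
          + 2 * c₀ * ((starRingEnd ℂ) (y' x) * v x).re
          + 2 * ((starRingEnd ℂ) (y' x) * g₄ x).re)
        ≤ Mg * (2 * (‖z x‖ * ‖g₃' x‖) + 2 * c₀ * (‖y' x‖ * ‖v x‖) + 2 * (‖y' x‖ * ‖g₄ x‖)) := by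
      refine (le_abs_self _).trans ?_
      rw [abs_mul]
      exact mul_le_mul hgb hT (abs_nonneg _) hMg0
    rw [e1, hBdef]
    simp only []
    nlinarith [t1, t2]
  -- integrability of pieces
  have hAi : IntervalIntegrable (fun x => ‖z x‖ ^ 2 + ‖y' x‖ ^ 2) volume p q :=
    ContinuousOn.intervalIntegrable
      (by rw [Set.uIcc_of_le hpq']; exact (hzc.norm.pow 2).add (hy'c.norm.pow 2))
  have hvy'i : IntervalIntegrable (fun x => ‖v x‖ * ‖y' x‖) volume p q :=
    ContinuousOn.intervalIntegrable (by rw [Set.uIcc_of_le hpq']; exact hvc.norm.mul hy'c.norm)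
  have hg3zi : IntervalIntegrable (fun x => ‖g₃' x‖ * ‖z x‖) volume p q :=
    ContinuousOn.intervalIntegrable (by rw [Set.uIcc_of_le hpq']; exact hg₃'c.norm.mul hzc.norm)
  have hg4y'i : IntervalIntegrable (fun x => ‖g₄ x‖ * ‖y' x‖) volume p q :=
    ContinuousOn.intervalIntegrable (by rw [Set.uIcc_of_le hpq']; exact hg₄c.norm.mul hy'c.norm)
  have hBi : IntervalIntegrable B volume p q :=
    (((hAi.const_mul Mg').add (hvy'i.const_mul (2 * Mg * c₀))).add
      (hg3zi.const_mul (2 * Mg))).add (hg4y'i.const_mul (2 * Mg))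
  have hmono : (∫ x in p..q, -(Fd x)) ≤ ∫ x in p..q, B x := by
    refine intervalIntegral.integral_mono_ae_restrict hpq' hFdi.neg hBi ?_
    have hnull : volume ({p, q} : Set ℝ) = 0 := (Set.toFinite _).measure_zero _
    refine (ae_restrict_iff' measurableSet_Icc).2 ?_
    filter_upwards [measure_eq_zero_iff_ae_notMem.1 hnull] with x hxn hxIcc
    rcases eq_or_lt_of_le hxIcc.1 with h1 | h1
    · exact absurd (by simp [← h1]) hxn
    rcases eq_or_lt_of_le hxIcc.2 with h2 | h2
    · exact absurd (by simp [h2]) hxn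
    exact hpoint x ⟨h1, h2⟩
  have hsplit : ∫ x in p..q, B x
      = Mg' * (∫ x in p..q, (‖z x‖ ^ 2 + ‖y' x‖ ^ 2))
        + 2 * Mg * c₀ * (∫ x in p..q, ‖v x‖ * ‖y' x‖)
        + 2 * Mg * (∫ x in p..q, ‖g₃' x‖ * ‖z x‖)
        + 2 * Mg * (∫ x in p..q, ‖g₄ x‖ * ‖y' x‖) := by
    rw [hBdef]
    rw [intervalIntegral.integral_add (((hAi.const_mul Mg').add
        (hvy'i.const_mul (2 * Mg * c₀))).add (hg3zi.const_mul (2 * Mg)))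
        (hg4y'i.const_mul (2 * Mg)),
      intervalIntegral.integral_add ((hAi.const_mul Mg').add
        (hvy'i.const_mul (2 * Mg * c₀))) (hg3zi.const_mul (2 * Mg)),
      intervalIntegral.integral_add (hAi.const_mul Mg') (hvy'i.const_mul (2 * Mg * c₀)),
      intervalIntegral.integral_const_mul, intervalIntegral.integral_const_mul,
      intervalIntegral.integral_const_mul, intervalIntegral.integral_const_mul]
  have h2 := aux_cs hpq' hvc hy'c
  have h3 := aux_cs hpq' hg₃'c hzc
  have h4 := aux_cs hpq' hg₄c hy'c
  have h2' : 2 * Mg * c₀ * (∫ x in p..q, ‖v x‖ * ‖y' x‖)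
      ≤ 2 * Mg * c₀ * (Real.sqrt (∫ x in p..q, ‖v x‖ ^ 2)
        * Real.sqrt (∫ x in p..q, ‖y' x‖ ^ 2)) :=
    mul_le_mul_of_nonneg_left h2 (by positivity)
  have h3' : 2 * Mg * (∫ x in p..q, ‖g₃' x‖ * ‖z x‖)
      ≤ 2 * Mg * (Real.sqrt (∫ x in p..q, ‖g₃' x‖ ^ 2)
        * Real.sqrt (∫ x in p..q, ‖z x‖ ^ 2)) :=
    mul_le_mul_of_nonneg_left h3 (by positivity)
  have h4' : 2 * Mg * (∫ x in p..q, ‖g₄ x‖ * ‖y' x‖)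
      ≤ 2 * Mg * (Real.sqrt (∫ x in p..q, ‖g₄ x‖ ^ 2)
        * Real.sqrt (∫ x in p..q, ‖y' x‖ ^ 2)) :=
    mul_le_mul_of_nonneg_left h4 (by positivity)
  have hneg : -(∫ x in p..q, Fd x) = ∫ x in p..q, -(Fd x) :=
    (intervalIntegral.integral_neg).symm
  rw [hLHS, hneg]
  calc (∫ x in p..q, -(Fd x)) ≤ ∫ x in p..q, B x := hmono
  _ ≤ _ := by rw [hsplit]; linarith
end
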